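/- Let A_1, …, A_m and B_1, …, B_m be two finite measurable partitions of the same measurable set M_l into pairwise disjoint sets, with ν(B_j) = ν(A_j) > 0 for every j (as holds when B_j = Φ^τ A_j for a measure-preserving map Φ^τ). Let μ be a finite (signed) measure on M_l and write δμ(E) := μ(E) − ν(E); since both families partition M_l, ∑_j δμ(B_j) = ∑_j δμ(A_j). Assume |δμ(A_j)| ≤ ν(A_j)/2 and |δμ(B_j)| ≤ ν(A_j)/2 for all j, and define the entropy production Δ_iS := −∑_{j=1}^m μ(A_j) ln(μ(A_j)/ν(A_j)) + ∑_{j=1}^m μ(B_j) ln(μ(B_j)/ν(B_j)). Then | Δ_iS − (1/2) ∑_{j=1}^m [ δμ(B_j)² − δμ(A_j)² ] / ν(A_j) | ≤ (2/3) ∑_{j=1}^m ( |δμ(A_j)|³ + |δμ(B_j)|³ ) / ν(A_j)². (This is the quadratic expansion, Eq. (36), of the entropy production Eq. (35) of the paper, where B_j = φ^τ A_j.) -/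

import Mathlib

open MeasureTheory

lemma log_dev_bound {s : ℝ} (hs : -(1/2) ≤ s) : |Real.log (1+s) - s| ≤ 2 * s^2 := by
  have hpos : (0:ℝ) < 1 + s := by linarith
  have h1 : Real.log (1+s) ≤ s := by
    have := Real.log_le_sub_one_of_pos hpos; linarith
  have h2 : s/(1+s) ≤ Real.log (1+s) := by
    have h := Real.one_sub_inv_le_log_of_pos hpos
    have he : 1 - (1+s)⁻¹ = s/(1+s) := by field_simp; ring
    linarith [he ▸ h]
  have h3 : s - s/(1+s) = s^2/(1+s) := by field_simp; ring
  have h4 : s^2/(1+s) ≤ 2 * s^2 := by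
    rw [div_le_iff₀ hpos]; nlinarith [sq_nonneg s]
  rw [abs_le]
  constructor <;> nlinarith [sq_nonneg s]

lemma h_bound {t : ℝ} (ht : |t| ≤ 1/2) :
    |(1+t) * Real.log (1+t) - t - t^2/2| ≤ 2/3 * |t|^3 := by
  obtain ⟨hl, hr⟩ := abs_le.1 ht
  have hmem : ∀ s ∈ Set.uIcc (0:ℝ) t, -(1/2) ≤ s := by
    intro s hs
    rcases Set.mem_uIcc.1 hs with ⟨h1,h2⟩|⟨h1,h2⟩ <;> linarith
  set h : ℝ → ℝ := fun s => (1+s) * Real.log (1+s) - s - s^2/2 with hh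
  have hd : ∀ s ∈ Set.uIcc (0:ℝ) t, HasDerivAt h (Real.log (1+s) - s) s := by
    intro s hs
    have hpos : (0:ℝ) < 1 + s := by have := hmem s hs; linarith
    have d1 : HasDerivAt (fun s : ℝ => 1 + s) 1 s := (hasDerivAt_id s).const_add 1
    have d2 : HasDerivAt (fun s : ℝ => Real.log (1+s)) (1/(1+s)) s := by
      exact ((Real.hasDerivAt_log hpos.ne').comp s d1).congr_deriv (by simp)
    have d3 : HasDerivAt (fun s : ℝ => (1+s) * Real.log (1+s))
        (1 * Real.log (1+s) + (1+s) * (1/(1+s))) s := d1.mul d2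
    have d4 : HasDerivAt h
        (1 * Real.log (1+s) + (1+s) * (1/(1+s)) - 1 - (2*s)/2) s := by
      exact ((d3.sub (hasDerivAt_id s)).sub
        (((hasDerivAt_pow 2 s)).div_const 2)).congr_deriv (by simp)
    convert d4 using 1
    field_simp
    ring
  have hcont : ContinuousOn (fun s => Real.log (1+s) - s) (Set.uIcc (0:ℝ) t) := by
    apply ContinuousOn.sub _ continuousOn_id
    apply ContinuousOn.log (by fun_prop)
    intro s hs; have := hmem s hs; intro h; linarith
  have hint : IntervalIntegrable (fun s => Real.log (1+s) - s) volume 0 t :=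
    hcont.intervalIntegrable
  have hftc : h t - h 0 = ∫ s in (0:ℝ)..t, (Real.log (1+s) - s) :=
    (intervalIntegral.integral_eq_sub_of_hasDerivAt hd hint).symm
  have h0 : h 0 = 0 := by simp [hh]
  have hbd : |∫ s in (0:ℝ)..t, (Real.log (1+s) - s)| ≤ |∫ s in (0:ℝ)..t, 2*s^2| := by
    rw [show |∫ s in (0:ℝ)..t, (Real.log (1+s) - s)| = ‖∫ s in (0:ℝ)..t, (Real.log (1+s) - s)‖ from rfl]
    apply intervalIntegral.norm_integral_le_abs_of_norm_le
    · filter_upwards [MeasureTheory.ae_restrict_mem measurableSet_uIoc] with s hs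
      have hs' : s ∈ Set.uIcc (0:ℝ) t := Set.uIoc_subset_uIcc hs
      exact log_dev_bound (hmem s hs')
    · exact (continuousOn_const.mul (by fun_prop)).intervalIntegrable
  have hcomp : (∫ s in (0:ℝ)..t, 2*s^2) = 2 * t^3 / 3 := by
    rw [intervalIntegral.integral_const_mul]
    rw [integral_pow]
    ring
  have : |h t| ≤ |2 * t^3/3| := by
    rw [show h t = h t - h 0 by rw [h0]; ring, hftc, ← hcomp]
    exact hbd
  calc |(1+t) * Real.log (1+t) - t - t^2/2| = |h t| := rfl
    _ ≤ |2*t^3/3| := this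
    _ = 2/3 * |t|^3 := by
        rw [abs_div, abs_mul, abs_pow]
        norm_num; ring

lemma term_bound {a x : ℝ} (ha : 0 < a) (hx : |x| ≤ a/2) :
    |(a+x) * Real.log ((a+x)/a) - x - x^2/(2*a)| ≤ 2/3 * |x|^3 / a^2 := by
  have ht : |x/a| ≤ 1/2 := by
    rw [abs_div, abs_of_pos ha, div_le_iff₀ ha]; linarith
  have key := h_bound ht
  have e1 : (a+x)/a = 1 + x/a := by field_simp
  have e2 : (a+x) * Real.log ((a+x)/a) - x - x^2/(2*a)
      = a * ((1+x/a)*Real.log (1+x/a) - x/a - (x/a)^2/2) := by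
    rw [e1]; field_simp
  rw [e2, abs_mul, abs_of_pos ha]
  calc a * |(1+x/a)*Real.log (1+x/a) - x/a - (x/a)^2/2|
      ≤ a * (2/3 * |x/a|^3) := by
        exact mul_le_mul_of_nonneg_left key ha.le
    _ = 2/3 * |x|^3 / a^2 := by
        rw [abs_div, abs_of_pos ha]; field_simp

/-- quadratic expansion, Eq. (36), of the entropy production,
Eq. (35). For two finite measurable partitions `{A_j}` and `{B_j}` of the same
set `M_l` with `ν(B_j) = ν(A_j) > 0` and deviations `δμ` at most half the
equilibrium measures, the entropy production
`Δ_iS = −∑_j μ(A_j) ln(μ(A_j)/ν(A_j)) + ∑_j μ(B_j) ln(μ(B_j)/ν(B_j))`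
agrees with `(1/2) ∑_j [δμ(B_j)² − δμ(A_j)²]/ν(A_j)` up to an error bounded by
`(2/3) ∑_j (|δμ(A_j)|³ + |δμ(B_j)|³)/ν(A_j)²`. -/
theorem entropy_production_quadratic_expansion {X : Type*} [MeasurableSpace X]
    (ν : Measure X) [IsFiniteMeasure ν]
    (μ : SignedMeasure X)
    (Ml : Set X) (hMl : MeasurableSet Ml)
    (m : ℕ) (A B : Fin m → Set X)
    (hAmeas : ∀ j, MeasurableSet (A j)) (hBmeas : ∀ j, MeasurableSet (B j))
    (hAdisj : ∀ i j, i ≠ j → Disjoint (A i) (A j))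
    (hBdisj : ∀ i j, i ≠ j → Disjoint (B i) (B j))
    (hAcover : (⋃ j, A j) = Ml) (hBcover : (⋃ j, B j) = Ml)
    (hνeq : ∀ j, ν (B j) = ν (A j)) (hνpos : ∀ j, 0 < ν (A j))
    (δμ : Set X → ℝ) (hδμ : ∀ E : Set X, δμ E = μ E - (ν E).toReal)
    (hδA : ∀ j, |δμ (A j)| ≤ (ν (A j)).toReal / 2)
    (hδB : ∀ j, |δμ (B j)| ≤ (ν (A j)).toReal / 2)
    (ΔiS : ℝ)
    (hΔiS : ΔiS = -(∑ j, μ (A j) * Real.log (μ (A j) / (ν (A j)).toReal))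
        + ∑ j, μ (B j) * Real.log (μ (B j) / (ν (B j)).toReal)) :
    |ΔiS - (1 / 2) * ∑ j, (δμ (B j) ^ 2 - δμ (A j) ^ 2) / (ν (A j)).toReal|
      ≤ (2 / 3) * ∑ j, (|δμ (A j)| ^ 3 + |δμ (B j)| ^ 3) / (ν (A j)).toReal ^ 2 := by
  have hapos : ∀ j, 0 < (ν (A j)).toReal := fun j =>
    ENNReal.toReal_pos (hνpos j).ne' (measure_ne_top ν _)
  have hν' : ∀ j, (ν (B j)).toReal = (ν (A j)).toReal := fun j => by rw [hνeq]
  have hμA : ∀ j, μ (A j) = (ν (A j)).toReal + δμ (A j) := fun j => by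
    rw [hδμ]; ring
  have hμB : ∀ j, μ (B j) = (ν (A j)).toReal + δμ (B j) := fun j => by
    rw [hδμ, hν']; ring
  -- sum of deviations equal
  have hsA : μ Ml = ∑ j, μ (A j) := by
    rw [← hAcover, VectorMeasure.of_disjoint_iUnion hAmeas
      (fun i j hij => hAdisj i j hij), tsum_fintype]
  have hsB : μ Ml = ∑ j, μ (B j) := by
    rw [← hBcover, VectorMeasure.of_disjoint_iUnion hBmeas
      (fun i j hij => hBdisj i j hij), tsum_fintype]
  have hsum : ∑ j, δμ (B j) = ∑ j, δμ (A j) := by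
    simp only [hδμ, Finset.sum_sub_distrib]
    rw [← hsA, ← hsB]
    congr 1
    exact Finset.sum_congr rfl fun j _ => hν' j
  -- per term bounds
  have htermA : ∀ j, |μ (A j) * Real.log (μ (A j)/(ν (A j)).toReal)
      - δμ (A j) - δμ (A j)^2/(2*(ν (A j)).toReal)|
      ≤ 2/3 * |δμ (A j)|^3 / (ν (A j)).toReal^2 := fun j => by
    rw [hμA j]; exact term_bound (hapos j) (hδA j)
  have htermB : ∀ j, |μ (B j) * Real.log (μ (B j)/(ν (A j)).toReal)
      - δμ (B j) - δμ (B j)^2/(2*(ν (A j)).toReal)|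
      ≤ 2/3 * |δμ (B j)|^3 / (ν (A j)).toReal^2 := fun j => by
    rw [hμB j]; exact term_bound (hapos j) (hδB j)
  -- the identity
  have hid : ΔiS - (1/2) * ∑ j, (δμ (B j)^2 - δμ (A j)^2)/(ν (A j)).toReal
      = ∑ j, ((μ (B j) * Real.log (μ (B j)/(ν (A j)).toReal)
            - δμ (B j) - δμ (B j)^2/(2*(ν (A j)).toReal))
          - (μ (A j) * Real.log (μ (A j)/(ν (A j)).toReal)
            - δμ (A j) - δμ (A j)^2/(2*(ν (A j)).toReal))) := by
    rw [hΔiS]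
    simp only [hν']
    have e : ∀ j : Fin m, (δμ (B j)^2 - δμ (A j)^2)/(ν (A j)).toReal
        = 2 * (δμ (B j)^2/(2*(ν (A j)).toReal)) - 2 * (δμ (A j)^2/(2*(ν (A j)).toReal)) :=
      fun j => by field_simp
    simp only [e, Finset.sum_sub_distrib, Finset.mul_sum, ← Finset.mul_sum]
    rw [hsum]
    ring
  rw [hid]
  calc |∑ j, ((μ (B j) * Real.log (μ (B j)/(ν (A j)).toReal)
            - δμ (B j) - δμ (B j)^2/(2*(ν (A j)).toReal))
          - (μ (A j) * Real.log (μ (A j)/(ν (A j)).toReal)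
            - δμ (A j) - δμ (A j)^2/(2*(ν (A j)).toReal)))|
      ≤ ∑ j, |(μ (B j) * Real.log (μ (B j)/(ν (A j)).toReal)
            - δμ (B j) - δμ (B j)^2/(2*(ν (A j)).toReal))
          - (μ (A j) * Real.log (μ (A j)/(ν (A j)).toReal)
            - δμ (A j) - δμ (A j)^2/(2*(ν (A j)).toReal))| :=
        Finset.abs_sum_le_sum_abs _ _
    _ ≤ ∑ j, (2/3 * |δμ (A j)|^3 / (ν (A j)).toReal^2
            + 2/3 * |δμ (B j)|^3 / (ν (A j)).toReal^2) := by
        apply Finset.sum_le_sum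
        intro j _
        have h1 := htermA j
        have h2 := htermB j
        have := abs_sub (μ (B j) * Real.log (μ (B j)/(ν (A j)).toReal)
            - δμ (B j) - δμ (B j)^2/(2*(ν (A j)).toReal))
          (μ (A j) * Real.log (μ (A j)/(ν (A j)).toReal)
            - δμ (A j) - δμ (A j)^2/(2*(ν (A j)).toReal))
        linarith
    _ = (2/3) * ∑ j, (|δμ (A j)|^3 + |δμ (B j)|^3) / (ν (A j)).toReal^2 := by
        rw [Finset.mul_sum]
        exact Finset.sum_congr rfl fun j _ => by ring
  done
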